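/- Let φ : ℝ^d → ℝ be a bounded function such that φ(x+z) − 2φ(x) + φ(x−z) ≤ C‖z‖² for all x,z (midpoint semiconcavity with constant C), and suppose φ(0) = 0 and limsup_{‖x‖→0} φ(x)/‖x‖ ≤ 0. Then φ(x) ≤ (C/2)‖x‖² for all x ∈ ℝ^d. -/
import Mathlib

/-- If `φ` is bounded, midpoint-semiconcave with constant `C`, vanishes at the origin and
satisfies `limsup_{‖x‖→0} φ(x)/‖x‖ ≤ 0`, then `φ(x) ≤ (C/2)‖x‖²` everywhere. -/
theorem semiconcave_quadratic_upper_bound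
    {d : ℕ} (φ : EuclideanSpace ℝ (Fin d) → ℝ) (C : ℝ) (hC : 0 ≤ C)
    (hbdd : ∃ M, ∀ x, |φ x| ≤ M)
    (hsc : ∀ x z : EuclideanSpace ℝ (Fin d), φ (x + z) - 2 * φ x + φ (x - z) ≤ C * ‖z‖ ^ 2)
    (h0 : φ 0 = 0)
    (hlimsup : ∀ ε > (0 : ℝ), ∃ δ > (0 : ℝ),
      ∀ x : EuclideanSpace ℝ (Fin d), 0 < ‖x‖ → ‖x‖ < δ → φ x / ‖x‖ ≤ ε) :
    ∀ x : EuclideanSpace ℝ (Fin d), φ x ≤ C / 2 * ‖x‖ ^ 2 := by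
  -- ψ is midpoint concave
  set ψ : EuclideanSpace ℝ (Fin d) → ℝ := fun y => φ y - C / 2 * ‖y‖ ^ 2 with hψ
  have hψ0 : ψ 0 = 0 := by simp [hψ, h0]
  have hconc : ∀ a z : EuclideanSpace ℝ (Fin d), ψ (a + z) - 2 * ψ a + ψ (a - z) ≤ 0 := by
    intro a z
    have hpar : ‖a + z‖ ^ 2 + ‖a - z‖ ^ 2 = 2 * (‖a‖ ^ 2 + ‖z‖ ^ 2) := by
      have := parallelogram_law_with_norm ℝ a z
      simpa [pow_two] using this
    have h := hsc a z
    simp only [hψ]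
    nlinarith [h, hpar]
  intro x
  rcases eq_or_ne x 0 with rfl | hx
  · simp [h0]
  have hxn : 0 < ‖x‖ := by simpa [norm_pos_iff] using hx
  -- it suffices: ψ x ≤ ε * ‖x‖ for all ε > 0
  have key : ∀ ε > (0 : ℝ), ψ x ≤ ε * ‖x‖ := by
    intro ε hε
    obtain ⟨δ, hδ, hδε⟩ := hlimsup ε hε
    obtain ⟨n, hn⟩ := exists_nat_gt (max 1 (‖x‖ / δ))
    have hn1 : (1 : ℝ) < n := lt_of_le_of_lt (le_max_left _ _) hn
    have hn0 : (0 : ℝ) < n := by linarith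
    set y : EuclideanSpace ℝ (Fin d) := (1 / (n : ℝ)) • x with hy
    have hyval : ‖y‖ = ‖x‖ / n := by
      simp [hy, norm_smul, abs_of_pos hn0, div_eq_mul_inv, mul_comm]
    have hny : 0 < ‖y‖ := by rw [hyval]; positivity
    have hylt : ‖y‖ < δ := by
      rw [hyval]
      rw [div_lt_iff₀ hn0]
      have h2 : ‖x‖ / δ < n := lt_of_le_of_lt (le_max_right _ _) hn
      rw [div_lt_iff₀ hδ] at h2
      linarith [h2]
    -- differences along the subdivision
    set D : ℕ → ℝ := fun k => ψ (((k : ℝ) + 1) • y) - ψ ((k : ℝ) • y) with hD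
    have hDanti : ∀ k, D (k + 1) ≤ D k := by
      intro k
      have h := hconc (((k : ℝ) + 1) • y) y
      have e1 : ((k : ℝ) + 1) • y + y = (((k + 1 : ℕ) : ℝ) + 1) • y := by
        push_cast; module
      have e2 : ((k : ℝ) + 1) • y - y = (k : ℝ) • y := by module
      have e3 : ((k + 1 : ℕ) : ℝ) • y = ((k : ℝ) + 1) • y := by push_cast; ring_nf
      rw [e1, e2] at h
      simp only [hD, e3]
      linarith
    have hDle : ∀ k, D k ≤ D 0 := by
      intro k
      induction k with
      | zero => exact le_refl _
      | succ m ih => exact le_trans (hDanti m) ih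
    -- telescoping
    have htel : ∀ m : ℕ, ψ ((m : ℝ) • y) ≤ m * D 0 := by
      intro m
      induction m with
      | zero => simp [hψ0]
      | succ m ih =>
        have := hDle m
        have e : ((m + 1 : ℕ) : ℝ) • y = ((m : ℝ) + 1) • y := by push_cast; ring_nf
        rw [e]
        have : ψ (((m : ℝ) + 1) • y) = ψ ((m : ℝ) • y) + D m := by simp [hD]
        rw [this]
        push_cast
        nlinarith [hDle m]
    have hxy : (n : ℝ) • y = x := by
      simp only [hy]
      rw [smul_smul]
      rw [mul_one_div, div_self (ne_of_gt hn0), one_smul]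
    have hD0 : D 0 = ψ y := by simp [hD, hψ0]
    have hψx : ψ x ≤ n * ψ y := by
      have := htel n
      rwa [hxy, hD0] at this
    -- bound ψ y
    have hφy : φ y ≤ ε * ‖y‖ := by
      have := hδε y hny hylt
      rwa [div_le_iff₀ hny] at this
    have hψy : ψ y ≤ ε * ‖y‖ := by
      simp only [hψ]
      nlinarith [sq_nonneg ‖y‖, mul_nonneg hC (sq_nonneg ‖y‖)]
    calc ψ x ≤ n * ψ y := hψx
      _ ≤ n * (ε * ‖y‖) := by nlinarith
      _ = ε * ‖x‖ := by rw [hyval]; field_simp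
  -- conclude ψ x ≤ 0
  have hψx0 : ψ x ≤ 0 := by
    refine le_of_forall_pos_le_add ?_
    intro ε hε
    have h1 := key (ε / ‖x‖) (by positivity)
    rw [div_mul_cancel₀ _ (ne_of_gt hxn)] at h1
    linarith
  simp only [hψ] at hψx0
  linarith
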